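/- arXiv:2201.07141 — 8 statements merged into one kernel-verified Lean document; each statement's English description precedes it below -/
import Mathlib

section
/- Let Λ be a finite index set equipped with a pseudometric dist, let m ∈ Matrix Λ Λ ℂ, let r ≥ 0, and let ψ ∈ ℂ^Λ. Then one can write m ψ = ψ₁ + ψ₂ where ψ₁ is supported within distance r of supp(ψ), ‖ψ₁‖₂ ≤ ‖m‖ · ‖ψ‖₂, and ‖ψ₂‖₂ ≤ ‖m‖_r · ‖ψ‖₂. -/
/-- The l2 -> l2 operator norm of a matrix. -/
noncomputable def matOpNorm {Λ : Type*} [Fintype Λ] [DecidableEq Λ]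
    (m : Matrix Λ Λ ℂ) : ℝ :=
  ‖Matrix.toEuclideanCLM (𝕜 := ℂ) m‖

/-- The quantity ‖m‖_r : the supremum of |⟨ψ, m φ⟩| over l2-unit vectors ψ, φ whose
supports are at distance greater than r (all pairwise distances exceed r). -/
noncomputable def matDistNorm {Λ : Type*} [Fintype Λ] [DecidableEq Λ]
    [PseudoMetricSpace Λ] (m : Matrix Λ Λ ℂ) (r : ℝ) : ℝ :=
  sSup { x : ℝ | ∃ ψ φ : EuclideanSpace ℂ Λ, ‖ψ‖ = 1 ∧ ‖φ‖ = 1 ∧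
    (∀ i ∈ Function.support ψ, ∀ j ∈ Function.support φ, r < dist i j) ∧
    x = ‖(inner ℂ ψ (Matrix.toEuclideanCLM (𝕜 := ℂ) m φ) : ℂ)‖ }

lemma matDistNorm_nonneg {Λ : Type*} [Fintype Λ] [DecidableEq Λ]
    [PseudoMetricSpace Λ] (m : Matrix Λ Λ ℂ) (r : ℝ) : 0 ≤ matDistNorm m r := by
  apply Real.sSup_nonneg
  rintro x ⟨a, b, -, -, -, rfl⟩
  exact norm_nonneg _

/-- Decomposition of the vector m ψ into a part supported within distance r of the
support of ψ and a far part of small norm. -/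
theorem exists_near_far_decomposition
    {Λ : Type*} [Fintype Λ] [DecidableEq Λ] [PseudoMetricSpace Λ]
    (m : Matrix Λ Λ ℂ) (r : ℝ) (hr : 0 ≤ r) (ψ : EuclideanSpace ℂ Λ) :
    ∃ ψ₁ ψ₂ : EuclideanSpace ℂ Λ,
      Matrix.toEuclideanCLM (𝕜 := ℂ) m ψ = ψ₁ + ψ₂ ∧
      (∀ i ∈ Function.support ψ₁, Metric.infDist i (Function.support ψ) ≤ r) ∧
      ‖ψ₁‖ ≤ matOpNorm m * ‖ψ‖ ∧
      ‖ψ₂‖ ≤ matDistNorm m r * ‖ψ‖ := by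
  classical
  set T := Matrix.toEuclideanCLM (𝕜 := ℂ) m with hT
  set ψ₁ : EuclideanSpace ℂ Λ :=
    WithLp.toLp 2 (fun i => if Metric.infDist i (Function.support ψ) ≤ r then T ψ i else 0) with hψ₁
  set ψ₂ : EuclideanSpace ℂ Λ :=
    WithLp.toLp 2 (fun i => if Metric.infDist i (Function.support ψ) ≤ r then 0 else T ψ i) with hψ₂
  refine ⟨ψ₁, ψ₂, ?_, ?_, ?_, ?_⟩
  · ext i
    show T ψ i = ψ₁ i + ψ₂ i
    simp only [hψ₁, hψ₂, PiLp.toLp_apply]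
    split <;> simp
  · intro i hi
    by_contra h
    apply hi
    simp only [hψ₁, PiLp.toLp_apply]
    rw [if_neg h]
  · have h1 : ‖ψ₁‖ ≤ ‖T ψ‖ := by
      rw [EuclideanSpace.norm_eq, EuclideanSpace.norm_eq]
      apply Real.sqrt_le_sqrt
      apply Finset.sum_le_sum
      intro i _
      simp only [hψ₁, PiLp.toLp_apply]
      split
      · exact le_refl _
      · simp only [norm_zero, ne_eq, OfNat.ofNat_ne_zero, not_false_eq_true, zero_pow]
        positivity
    exact h1.trans (T.le_opNorm ψ)
  · by_cases hψ2 : ψ₂ = 0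
    · rw [hψ2, norm_zero]
      exact mul_nonneg (matDistNorm_nonneg m r) (norm_nonneg ψ)
    have hψ0 : ψ ≠ 0 := by
      rintro rfl
      apply hψ2
      ext i
      simp only [hψ₂, map_zero, PiLp.toLp_apply]
      split <;> simp
    have hnψ : (0:ℝ) < ‖ψ‖ := norm_pos_iff.mpr hψ0
    have hnψ2 : (0:ℝ) < ‖ψ₂‖ := norm_pos_iff.mpr hψ2
    -- key inner product identity
    have hortho : (inner ℂ ψ₂ ψ₁ : ℂ) = 0 := by
      rw [PiLp.inner_apply]
      apply Finset.sum_eq_zero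
      intro i _
      simp only [hψ₁, hψ₂, PiLp.toLp_apply]
      split <;> simp
    have hsum : T ψ = ψ₁ + ψ₂ := by
      ext i
      show T ψ i = ψ₁ i + ψ₂ i
      simp only [hψ₁, hψ₂, PiLp.toLp_apply]
      split <;> simp
    have hkey : (inner ℂ ψ₂ (T ψ) : ℂ) = (‖ψ₂‖ : ℂ)^2 := by
      rw [hsum, inner_add_right, hortho, zero_add, inner_self_eq_norm_sq_to_K]
      norm_cast
    set χ : EuclideanSpace ℂ Λ := ((‖ψ₂‖ : ℂ))⁻¹ • ψ₂ with hχ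
    set φ : EuclideanSpace ℂ Λ := ((‖ψ‖ : ℂ))⁻¹ • ψ with hφ
    have hnχ : ‖χ‖ = 1 := by
      rw [hχ, norm_smul]
      simp [hnψ2.ne']
    have hnφ : ‖φ‖ = 1 := by
      rw [hφ, norm_smul]
      simp [hnψ.ne']
    have hsupp : ∀ i ∈ Function.support χ, ∀ j ∈ Function.support φ, r < dist i j := by
      intro i hi j hj
      have hi2 : ψ₂ i ≠ 0 := by
        intro h
        apply hi
        show ((‖ψ₂‖ : ℂ))⁻¹ • ψ₂ i = 0
        simp [h]
      have hi3 : ¬ Metric.infDist i (Function.support ψ) ≤ r := by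
        intro h
        apply hi2
        simp only [hψ₂, PiLp.toLp_apply]
        rw [if_pos h]
      have hj2 : ψ j ≠ 0 := by
        intro h
        apply hj
        show ((‖ψ‖ : ℂ))⁻¹ • ψ j = 0
        simp [h]
      have := Metric.infDist_le_dist_of_mem (x := i) (Function.mem_support.mpr hj2)
      linarith [not_le.mp hi3]
    have hinner : ‖(inner ℂ χ (T φ) : ℂ)‖ = ‖ψ₂‖ / ‖ψ‖ := by
      have : T φ = ((‖ψ‖ : ℂ))⁻¹ • T ψ := by rw [hφ, map_smul]
      rw [hχ, this, inner_smul_left, inner_smul_right, hkey, map_inv₀, Complex.conj_ofReal]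
      simp only [norm_mul, norm_inv, norm_pow, Complex.norm_real, Real.norm_eq_abs,
        abs_of_pos hnψ2, abs_of_pos hnψ]
      field_simp
    have hmem : ‖ψ₂‖ / ‖ψ‖ ∈ { x : ℝ | ∃ a b : EuclideanSpace ℂ Λ, ‖a‖ = 1 ∧ ‖b‖ = 1 ∧
        (∀ i ∈ Function.support a, ∀ j ∈ Function.support b, r < dist i j) ∧
        x = ‖(inner ℂ a (Matrix.toEuclideanCLM (𝕜 := ℂ) m b) : ℂ)‖ } :=
      ⟨χ, φ, hnχ, hnφ, hsupp, hinner.symm⟩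
    have hbdd : BddAbove { x : ℝ | ∃ a b : EuclideanSpace ℂ Λ, ‖a‖ = 1 ∧ ‖b‖ = 1 ∧
        (∀ i ∈ Function.support a, ∀ j ∈ Function.support b, r < dist i j) ∧
        x = ‖(inner ℂ a (Matrix.toEuclideanCLM (𝕜 := ℂ) m b) : ℂ)‖ } := by
      refine ⟨matOpNorm m, ?_⟩
      rintro x ⟨a, b, ha, hb, -, rfl⟩
      calc ‖(inner ℂ a (T b) : ℂ)‖ ≤ ‖a‖ * ‖T b‖ := norm_inner_le_norm a (T b)
        _ ≤ ‖a‖ * (‖T‖ * ‖b‖) := by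
            exact mul_le_mul_of_nonneg_left (T.le_opNorm b) (norm_nonneg a)
        _ = matOpNorm m := by rw [ha, hb, mul_one, one_mul]; rfl
    have hle : ‖ψ₂‖ / ‖ψ‖ ≤ matDistNorm m r := le_csSup hbdd hmem
    rw [div_le_iff₀ hnψ] at hle
    exact hle
end

section
/- Let n be a positive integer and let v ∈ Matrix (Fin n) (Fin n) ℂ be fixed. If h : ℝ → Matrix (Fin n) (Fin n) ℂ is differentiable and satisfies the double bracket flow equation ∂_B h(B) = 4[[v, h(B)], h(B)], then for every natural number m the function B ↦ Tr(h(B)^m) is constant. -/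
attribute [local instance] Matrix.frobeniusNormedAddCommGroup Matrix.frobeniusNormedSpace
attribute [local instance] Matrix.frobeniusNormedRing Matrix.frobeniusNormedAlgebra

private lemma aux_hasDerivAt_pow {n : ℕ} {f : ℝ → Matrix (Fin n) (Fin n) ℂ}
    {f' : Matrix (Fin n) (Fin n) ℂ} {B : ℝ} (hf : HasDerivAt f f' B) (m : ℕ) :
    HasDerivAt (fun B => f B ^ m)
      (∑ p ∈ Finset.range m, f B ^ p * f' * f B ^ (m - 1 - p)) B := by
  induction m with
  | zero =>
    simp only [pow_zero, Finset.range_zero, Finset.sum_empty]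
    exact hasDerivAt_const B (1 : Matrix (Fin n) (Fin n) ℂ)
  | succ m ih =>
    have key : HasDerivAt (fun B => f B * f B ^ m)
        (f' * f B ^ m + f B * ∑ p ∈ Finset.range m, f B ^ p * f' * f B ^ (m - 1 - p)) B :=
      hf.mul ih
    have : (fun B => f B ^ (m + 1)) = fun B => f B * f B ^ m := by
      funext B; rw [pow_succ']
    rw [this]
    convert key using 1
    rw [Finset.sum_range_succ', Finset.mul_sum]
    simp only [pow_zero, one_mul, Nat.add_sub_cancel, Nat.succ_sub_one]
    rw [add_comm]
    congr 1
    apply Finset.sum_congr rfl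
    intro p hp
    rw [pow_succ', Nat.sub_sub, Nat.add_comm 1 p]
    simp [mul_assoc]

private lemma aux_trace_zero {n : ℕ} (v a : Matrix (Fin n) (Fin n) ℂ) (i k : ℕ) :
    (a ^ i * ((4 : ℂ) • ⁅⁅v, a⁆, a⁆) * a ^ k).trace = 0 := by
  set w := ⁅v, a⁆ with hw
  have hlie : ⁅w, a⁆ = w * a - a * w := Ring.lie_def w a
  rw [hlie, mul_smul_comm, smul_mul_assoc, Matrix.trace_smul]
  have e1 : a ^ i * (w * a - a * w) * a ^ k
      = a ^ i * w * a ^ (k + 1) - a ^ (i + 1) * w * a ^ k := by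
    rw [mul_sub, sub_mul, pow_succ']
    simp only [mul_assoc, pow_succ]
  rw [e1, Matrix.trace_sub]
  rw [Matrix.trace_mul_comm (a ^ i * ⁅v, a⁆) (a ^ (k + 1)),
      Matrix.trace_mul_comm (a ^ (i + 1) * ⁅v, a⁆) (a ^ k),
      ← mul_assoc, ← mul_assoc, ← pow_add, ← pow_add]
  rw [show k + 1 + i = k + (i + 1) by ring]
  simp

/-- The double bracket flow preserves all trace powers (spectral invariants). -/
theorem trace_pow_constant_of_doubleBracketFlow
    (n : ℕ) (hn : 0 < n) (v : Matrix (Fin n) (Fin n) ℂ)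
    (h : ℝ → Matrix (Fin n) (Fin n) ℂ)
    (hderiv : ∀ B, HasDerivAt h ((4 : ℂ) • ⁅⁅v, h B⁆, h B⁆) B)
    (m : ℕ) :
    ∀ B : ℝ, (h B ^ m).trace = (h 0 ^ m).trace := by
  set e : Matrix (Fin n) (Fin n) ℂ →L[ℝ] ℂ :=
    LinearMap.toContinuousLinearMap ((Matrix.traceLinearMap (Fin n) ℂ ℂ).restrictScalars ℝ)
  have he : ∀ x : Matrix (Fin n) (Fin n) ℂ, e x = x.trace := fun x => rfl
  have hkey : ∀ B, HasDerivAt (fun B => (h B ^ m).trace) 0 B := by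
    intro B
    have hp := aux_hasDerivAt_pow (hderiv B) m
    have := e.hasFDerivAt.comp_hasDerivAt B hp
    have h0 : e (∑ p ∈ Finset.range m, h B ^ p * ((4 : ℂ) • ⁅⁅v, h B⁆, h B⁆) * h B ^ (m - 1 - p)) = 0 := by
      rw [he, Matrix.trace_sum]
      exact Finset.sum_eq_zero fun p _ => aux_trace_zero v (h B) p (m - 1 - p)
    have this := this.congr_deriv h0
    exact this
  intro B
  exact is_const_of_deriv_eq_zero (fun x => (hkey x).differentiableAt)
    (fun x => (hkey x).deriv) B 0
end

section
/- Let n be a positive integer and let H, V ∈ Matrix (Fin n) (Fin n) ℂ be Hermitian. Then [[V, H], H] = 0 if and only if [V, H] = 0. (In particular, the stationary points of the double bracket flow ∂_B H = [[V, H], H] are exactly the Hermitian matrices commuting with V.) -/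
open Matrix

lemma aux_trace_conjTranspose_mul_self_eq_zero {n : ℕ}
    (A : Matrix (Fin n) (Fin n) ℂ) (h : Matrix.trace (Aᴴ * A) = 0) : A = 0 := by
  have h1 : Matrix.trace (Aᴴ * A) =
      ((∑ j, ∑ i, Complex.normSq (A i j) : ℝ) : ℂ) := by
    simp only [Matrix.trace, Matrix.diag, Matrix.mul_apply,
      Matrix.conjTranspose_apply]
    push_cast
    congr 1; ext j; congr 1; ext i
    rw [Complex.normSq_eq_conj_mul_self, starRingEnd_apply]
  rw [h1, Complex.ofReal_eq_zero] at h
  have hnn : ∀ j ∈ Finset.univ, (0:ℝ) ≤ ∑ i, Complex.normSq (A i j) := by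
    intro j _
    exact Finset.sum_nonneg fun i _ => Complex.normSq_nonneg _
  ext i j
  have h2 := (Finset.sum_eq_zero_iff_of_nonneg hnn).mp h j (Finset.mem_univ j)
  have h3 := (Finset.sum_eq_zero_iff_of_nonneg
    (fun i _ => Complex.normSq_nonneg (A i j))).mp h2 i (Finset.mem_univ i)
  simpa using Complex.normSq_eq_zero.mp h3

/-- Fixed points of the double bracket flow among Hermitian matrices:
[[V,H],H] = 0 iff [V,H] = 0. -/
theorem doubleBracket_eq_zero_iff_commute
    (n : ℕ) (hn : 0 < n) (H V : Matrix (Fin n) (Fin n) ℂ)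
    (hH : H.IsHermitian) (hV : V.IsHermitian) :
    ⁅⁅V, H⁆, H⁆ = 0 ↔ ⁅V, H⁆ = 0 := by
  constructor
  · intro h
    set A := ⁅V, H⁆ with hA
    have hAH : A * H = H * A := by
      have := h
      rw [Ring.lie_def, sub_eq_zero] at this
      exact this
    have hAherm : Aᴴ = -A := by
      simp [hA, Ring.lie_def, Matrix.conjTranspose_sub, Matrix.conjTranspose_mul,
        hH.eq, hV.eq, neg_sub]
    have htr : Matrix.trace (A * A) = 0 := by
      have e1 : A * A = V * H * A - H * V * A := by
        rw [hA, Ring.lie_def]; noncomm_ring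
      rw [e1, Matrix.trace_sub]
      have e2 : Matrix.trace (H * V * A) = Matrix.trace (V * H * A) := by
        calc Matrix.trace (H * V * A) = Matrix.trace (A * (H * V)) :=
              Matrix.trace_mul_comm _ _
          _ = Matrix.trace ((A * H) * V) := by rw [mul_assoc]
          _ = Matrix.trace ((H * A) * V) := by rw [hAH]
          _ = Matrix.trace (V * (H * A)) := Matrix.trace_mul_comm _ _
          _ = Matrix.trace (V * H * A) := by rw [mul_assoc]
      rw [e2]; simp
    have : Matrix.trace (Aᴴ * A) = 0 := by
      rw [hAherm]
      simp [htr]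
    rw [hA] at *
    exact aux_trace_conjTranspose_mul_self_eq_zero _ this
  · intro h
    rw [h]
    rw [Ring.lie_def]; simp
end

section
/- Let n be a positive integer, let V ∈ Matrix (Fin n) (Fin n) ℂ be Hermitian, and let H : ℝ → Matrix (Fin n) (Fin n) ℂ be differentiable with H(B) Hermitian for all B and ∂_B H(B) = [[V, H(B)], H(B)]. Then d/dB Tr((H(B) − V)²) = −2 Tr([V, H(B)] · [V, H(B)]†) ≤ 0; that is, the potential Tr((H(B) − V)²) is non-increasing along the double bracket flow. -/
open scoped Matrix

attribute [local instance] Matrix.frobeniusNormedAddCommGroup Matrix.frobeniusNormedSpace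

open scoped ComplexOrder

attribute [local instance] Matrix.frobeniusNormedRing Matrix.frobeniusNormedAlgebra

/-- The potential Tr((H(B) - V)^2) is non-increasing along the double bracket flow,
with derivative -2 Tr([V,H][V,H]†) ≤ 0. -/
theorem potential_nonincreasing_of_doubleBracketFlow
    (n : ℕ) (hn : 0 < n) (V : Matrix (Fin n) (Fin n) ℂ) (hV : V.IsHermitian)
    (H : ℝ → Matrix (Fin n) (Fin n) ℂ)
    (hherm : ∀ B, (H B).IsHermitian)
    (hderiv : ∀ B, HasDerivAt H (⁅⁅V, H B⁆, H B⁆) B) :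
    ∀ B : ℝ,
      HasDerivAt (fun B => ((H B - V) ^ 2).trace)
        (-2 * (⁅V, H B⁆ * (⁅V, H B⁆)ᴴ).trace) B ∧
      -2 * (⁅V, H B⁆ * (⁅V, H B⁆)ᴴ).trace ≤ 0 := by
  intro B
  set K := H B with hK
  constructor
  · have hg : HasDerivAt (fun B => H B - V) (⁅⁅V, K⁆, K⁆) B := (hderiv B).sub_const V
    have hsq : HasDerivAt (fun B => (H B - V) * (H B - V))
        (⁅⁅V, K⁆, K⁆ * (K - V) + (K - V) * ⁅⁅V, K⁆, K⁆) B := hg.mul hg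
    have htr := (((Matrix.traceLinearMap (Fin n) ℂ ℂ).restrictScalars
      ℝ).toContinuousLinearMap.hasFDerivAt).comp_hasDerivAt B hsq
    simp only [LinearMap.coe_toContinuousLinearMap', LinearMap.coe_restrictScalars,
      Matrix.traceLinearMap_apply, Function.comp] at htr
    have herm : Kᴴ = K := (hherm B).eq
    have key : (⁅⁅V, K⁆, K⁆ * (K - V) + (K - V) * ⁅⁅V, K⁆, K⁆).trace
        = -2 * (⁅V, K⁆ * (⁅V, K⁆)ᴴ).trace := by
      simp only [Ring.lie_def, Matrix.conjTranspose_sub, Matrix.conjTranspose_mul, herm, hV.eq,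
        Matrix.sub_mul, Matrix.mul_sub, Matrix.trace_sub, Matrix.trace_add]
      have r1 : ∀ (A B C D : Matrix (Fin n) (Fin n) ℂ),
          (A * B * C * D).trace = (D * A * B * C).trace := fun A B C D => by
        rw [Matrix.trace_mul_comm (A * B * C) D, show D * (A * B * C) = D * A * B * C from by
          noncomm_ring]
      have r2 : ∀ (A B C D : Matrix (Fin n) (Fin n) ℂ),
          (A * B * C * D).trace = (B * C * D * A).trace := fun A B C D => (r1 B C D A).symm
      simp only [← mul_assoc]
      rw [r2 K V K K, r2 K K V K, r2 K V K K, r1 K K K V, r1 V K K V, r2 K V K V, r2 K K V V,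
        r2 K V V K]
      ring
    rw [← key]
    have heq : (fun B => ((H B - V) ^ 2).trace)
        = (⇑(Matrix.traceLinearMap (Fin n) ℂ ℂ) ∘ fun B => (H B - V) * (H B - V)) := by
      funext x; simp [pow_two]
    rw [heq]
    exact htr
  · have ht : 0 ≤ (⁅V, K⁆ * (⁅V, K⁆)ᴴ).trace := by
      rw [Matrix.trace]
      refine Finset.sum_nonneg fun i _ => ?_
      simp only [Matrix.diag_apply, Matrix.mul_apply, Matrix.conjTranspose_apply]
      exact Finset.sum_nonneg fun j _ => mul_star_self_nonneg _
    have h2 : (0:ℂ) ≤ 2 := by norm_num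
    calc -2 * (⁅V, K⁆ * (⁅V, K⁆)ᴴ).trace = -(2 * (⁅V, K⁆ * (⁅V, K⁆)ᴴ).trace) := by ring
    _ ≤ 0 := neg_nonpos.mpr (mul_nonneg h2 ht)
end

section
/- Let n be a positive integer and let H, V, η ∈ Matrix (Fin n) (Fin n) ℂ with H, V Hermitian and η anti-Hermitian (η† = −η). Then the first-order variation of the potential under the infinitesimal unitary change H ↦ (1 + sη) H (1 + sη)⁻¹, namely d/ds at s = 0 of Tr((e^{sη} H e^{−sη} − V)²), equals −2 Tr([η, H] V) = −2 Tr(η [H, V]). -/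
open scoped Matrix

attribute [local instance] Matrix.frobeniusNormedAddCommGroup Matrix.frobeniusNormedSpace

open NormedSpace

attribute [local instance] Matrix.frobeniusNormedRing Matrix.frobeniusNormedAlgebra

/-- First variation of the potential Tr((e^{sη} H e^{-sη} - V)^2) at s = 0. -/
theorem firstVariation_of_potential
    (n : ℕ) (hn : 0 < n) (H V η : Matrix (Fin n) (Fin n) ℂ)
    (hH : H.IsHermitian) (hV : V.IsHermitian) (hη : ηᴴ = -η) :
    HasDerivAt
      (fun s : ℝ =>
        ((exp ((s : ℂ) • η) * H * exp (-(s : ℂ) • η) - V) ^ 2).trace)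
      (-2 * (⁅η, H⁆ * V).trace) 0 ∧
    -2 * (⁅η, H⁆ * V).trace = -2 * (η * ⁅H, V⁆).trace := by
  have haux : ∀ M : Matrix (Fin n) (Fin n) ℂ,
      HasDerivAt (fun s : ℝ => exp ((s : ℂ) • M)) M 0 := by
    intro M
    have h0 := (hasDerivAt_exp_smul_const (𝕂 := ℂ) M (0 : ℂ)).hasFDerivAt.restrictScalars ℝ
    rw [show (0 : ℂ) = ((0 : ℝ) : ℂ) by norm_num] at h0
    have h2 := h0.comp (0 : ℝ) Complex.ofRealCLM.hasFDerivAt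
    have h3 := h2.hasDerivAt
    simp at h3
    exact h3
  constructor
  · have hA : HasDerivAt (fun s : ℝ => exp ((s : ℂ) • η)) η 0 := haux η
    have hB : HasDerivAt (fun s : ℝ => exp (-(s : ℂ) • η)) (-η) 0 := by
      have := haux (-η)
      simp only [neg_smul, smul_neg] at this ⊢
      exact this
    have hf : HasDerivAt
        (fun s : ℝ => exp ((s : ℂ) • η) * H * exp (-(s : ℂ) • η) - V)
        (η * H - H * η) 0 := by
      have h1 : HasDerivAt (fun s : ℝ => exp ((s : ℂ) • η) * H) (η * H) 0 := by
        have h1' := hA.mul_const H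
        simp at h1'
        exact h1'
      have h2 := h1.mul hB
      simp only [Complex.ofReal_zero, zero_smul, neg_zero, exp_zero, mul_one, one_mul] at h2
      have h2' : HasDerivAt
          (fun s : ℝ => exp ((s : ℂ) • η) * H * exp (-(s : ℂ) • η))
          (η * H + H * -η) 0 := by
        exact h2
      have h3 := h2'.sub_const V
      simp only [mul_neg, ← sub_eq_add_neg] at h3
      exact h3
    have hg := (hf.mul hf)
    simp only [Complex.ofReal_zero, zero_smul, neg_zero, exp_zero, mul_one, one_mul] at hg
    have htr := (((Matrix.traceLinearMap (Fin n) ℂ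
      ℂ).toContinuousLinearMap.restrictScalars ℝ).hasFDerivAt).comp_hasDerivAt 0 hg
    have key : HasDerivAt
        (fun s : ℝ =>
          ((exp ((s : ℂ) • η) * H * exp (-(s : ℂ) • η) - V) ^ 2).trace)
        (((η * H - H * η) * (H - V) + (H - V) * (η * H - H * η)).trace) 0 := by
      simp only [sq]
      exact htr
    convert key using 1
    have c1 : (H * η * H).trace = (η * (H * H)).trace := by
      rw [Matrix.trace_mul_comm (H * η) H, ← mul_assoc, Matrix.trace_mul_comm (H * H) η]
    have c2 : (η * H * H).trace = (η * (H * H)).trace := by rw [mul_assoc]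
    have c3 : (H * η * V).trace = (η * (V * H)).trace := by
      rw [Matrix.trace_mul_comm (H * η) V, ← mul_assoc, Matrix.trace_mul_comm (V * H) η]
    have c4 : (η * H * V).trace = (η * (H * V)).trace := by rw [mul_assoc]
    have c5 : (H * (η * H)).trace = (η * (H * H)).trace := by rw [← mul_assoc, c1]
    have c6 : (V * (η * H)).trace = (η * (H * V)).trace := by
      rw [Matrix.trace_mul_comm V (η * H), c4]
    have c7 : (H * (H * η)).trace = (η * (H * H)).trace := by
      rw [Matrix.trace_mul_comm H (H * η), c1]
    have c8 : (V * (H * η)).trace = (η * (V * H)).trace := by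
      rw [Matrix.trace_mul_comm V (H * η), c3]
    simp only [Ring.lie_def, Matrix.sub_mul, Matrix.mul_sub, Matrix.trace_sub,
      Matrix.trace_add, c1, c2, c3, c4, c5, c6, c7, c8]
    ring
  · simp only [Ring.lie_def, Matrix.mul_sub, Matrix.sub_mul, Matrix.trace_sub, mul_assoc]
    rw [Matrix.trace_mul_comm H (η * V), mul_assoc]
end

section
/- Let Λ be a finite index set equipped with a pseudometric dist, let R, J > 0, and let h ∈ Matrix Λ Λ ℂ with ‖h‖ ≤ J and h_{ij} = 0 whenever dist(i, j) > R. Then for every τ ≥ 0, every natural number M, and all unit vectors ψ, φ ∈ ℂ^Λ whose supports are at distance greater than M R, one has |⟨ψ, exp(τ h) φ⟩| ≤ ∑_{m=M+1}^∞ (τ J)^m / m!. In particular, for M large compared to τ J this is exponentially small in M, so imaginary-time evolution generated by a quadratic (free-fermion) Hamiltonian spreads at most linearly, up to exponentially small error, within distance O(R τ J). -/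
set_option maxHeartbeats 1000000

/-- Entries of powers of a finite-range matrix vanish beyond the accumulated range. -/
lemma pow_entry_eq_zero_of_dist {Λ : Type*} [Fintype Λ] [DecidableEq Λ]
    [PseudoMetricSpace Λ] (R : ℝ) (h : Matrix Λ Λ ℂ)
    (hrange : ∀ i j, R < dist i j → h i j = 0) :
    ∀ (n : ℕ), ∀ i j, (n : ℝ) * R < dist i j → (h ^ n) i j = 0 := by
  intro n
  induction n with
  | zero =>
    intro i j hij
    simp only [Nat.cast_zero, zero_mul] at hij
    have hne : i ≠ j := by
      rintro rfl
      simp at hij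
    simp [Matrix.one_apply_ne hne]
  | succ n ih =>
    intro i j hij
    rw [pow_succ, Matrix.mul_apply]
    refine Finset.sum_eq_zero fun k _ => ?_
    by_cases h1 : (n : ℝ) * R < dist i k
    · rw [ih i k h1, zero_mul]
    by_cases h2 : R < dist k j
    · rw [hrange k j h2, mul_zero]
    exfalso
    push_neg at h1 h2
    have htri := dist_triangle i k j
    have : ((n : ℝ) + 1) * R < dist i j := by
      push_cast at hij; linarith
    linarith

open NormedSpace in
/-- Locality bound for imaginary-time free-fermion evolution: the matrix elements of
exp(τ h) between unit vectors supported at distance greater than M·R are bounded by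
the tail ∑_{m ≥ M+1} (τJ)^m / m! of the exponential series. -/
theorem exp_matrix_locality_bound
    {Λ : Type*} [Fintype Λ] [DecidableEq Λ] [PseudoMetricSpace Λ]
    (R J : ℝ) (hR : 0 < R) (hJ : 0 < J)
    (h : Matrix Λ Λ ℂ) (hnorm : matOpNorm h ≤ J)
    (hrange : ∀ i j, R < dist i j → h i j = 0)
    (τ : ℝ) (hτ : 0 ≤ τ) (M : ℕ)
    (ψ φ : EuclideanSpace ℂ Λ) (hψ : ‖ψ‖ = 1) (hφ : ‖φ‖ = 1)
    (hsupp : ∀ i ∈ Function.support ψ, ∀ j ∈ Function.support φ,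
      (M : ℝ) * R < dist i j) :
    ‖(inner ℂ ψ (Matrix.toEuclideanCLM (𝕜 := ℂ) (exp ((τ : ℂ) • h)) φ) : ℂ)‖ ≤
      ∑' m : ℕ, (τ * J) ^ (M + 1 + m) / Nat.factorial (M + 1 + m) := by
  classical
  set A : EuclideanSpace ℂ Λ →L[ℂ] EuclideanSpace ℂ Λ :=
    Matrix.toEuclideanCLM (𝕜 := ℂ) h with hA
  -- transfer exp through the star algebra equivalence
  letI : MetricSpace (Matrix Λ Λ ℂ) := Matrix.instL2OpMetricSpace
  letI : NormedRing (Matrix Λ Λ ℂ) := Matrix.instL2OpNormedRing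
  letI : NormedAlgebra ℂ (Matrix Λ Λ ℂ) := Matrix.instL2OpNormedAlgebra
  letI : CompleteSpace (Matrix Λ Λ ℂ) := FiniteDimensional.complete ℂ _
  letI : NormedAlgebra ℚ (Matrix Λ Λ ℂ) := NormedAlgebra.restrictScalars ℚ ℂ _
  have hcont : Continuous (Matrix.toEuclideanCLM (𝕜 := ℂ) (n := Λ)) := by
    have hiso : Isometry (Matrix.toEuclideanCLM (𝕜 := ℂ) (n := Λ)) :=
      AddMonoidHomClass.isometry_of_norm _ fun x => (Matrix.cstar_norm_def x).symm
    exact hiso.continuous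
  have hexp : Matrix.toEuclideanCLM (𝕜 := ℂ) (exp ((τ : ℂ) • h)) =
      exp ((τ : ℂ) • A) := by
    rw [map_exp _ hcont, map_smul]
  -- the continuous linear functional T ↦ ⟪ψ, T φ⟫
  set L : (EuclideanSpace ℂ Λ →L[ℂ] EuclideanSpace ℂ Λ) →L[ℂ] ℂ :=
    (innerSL ℂ ψ).comp (ContinuousLinearMap.apply ℂ (EuclideanSpace ℂ Λ) φ) with hL
  have hLval : ∀ T : EuclideanSpace ℂ Λ →L[ℂ] EuclideanSpace ℂ Λ,
      L T = (inner ℂ ψ (T φ) : ℂ) := fun T => rfl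
  have hsummable : Summable fun n : ℕ => ((n.factorial : ℂ)⁻¹) • ((τ : ℂ) • A) ^ n :=
    expSeries_summable' (𝕂 := ℂ) ((τ : ℂ) • A)
  set g : ℕ → ℂ := fun n => L (((n.factorial : ℂ)⁻¹) • ((τ : ℂ) • A) ^ n) with hg
  have hgsum : Summable g := hsummable.map L L.continuous
  have hmain : (inner ℂ ψ (Matrix.toEuclideanCLM (𝕜 := ℂ) (exp ((τ : ℂ) • h)) φ) : ℂ) =
      ∑' n, g n := by
    rw [hexp, ← hLval, exp_eq_tsum (𝕂 := ℂ), L.map_tsum hsummable]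
  -- vanishing of the first M+1 terms
  have hvanish : ∀ n ≤ M, g n = 0 := by
    intro n hn
    have hAn : ((τ : ℂ) • A) ^ n = ((τ : ℂ) ^ n) • Matrix.toEuclideanCLM (𝕜 := ℂ) (h ^ n) := by
      rw [smul_pow, hA, ← map_pow]
    have hinner : (inner ℂ ψ (Matrix.toEuclideanCLM (𝕜 := ℂ) (h ^ n) φ) : ℂ) = 0 := by
      rw [PiLp.inner_apply]
      refine Finset.sum_eq_zero fun i _ => ?_
      by_cases hψi : ψ i = 0
      · simp [hψi]
      have hcomp : (Matrix.toEuclideanCLM (𝕜 := ℂ) (h ^ n) φ) i =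
          ∑ j, (h ^ n) i j * φ j := rfl
      rw [hcomp]
      have hz : ∑ j, (h ^ n) i j * φ j = 0 := by
        refine Finset.sum_eq_zero fun j _ => ?_
        by_cases hφj : φ j = 0
        · simp [hφj]
        have hd : (M : ℝ) * R < dist i j :=
          hsupp i (Function.mem_support.mpr hψi) j (Function.mem_support.mpr hφj)
        have hd' : (n : ℝ) * R < dist i j :=
          lt_of_le_of_lt (by
            have hnM : (n : ℝ) ≤ (M : ℝ) := by exact_mod_cast hn
            nlinarith) hd
        rw [pow_entry_eq_zero_of_dist R h hrange n i j hd', zero_mul]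
      rw [hz]
      exact inner_zero_right _
    simp only [hg, hAn, map_smul, hLval, ContinuousLinearMap.smul_apply,
      inner_smul_right, hinner, smul_zero, mul_zero, smul_eq_mul]
  -- norm bound on each term
  have hnormA : ‖A‖ ≤ J := hnorm
  have happly : ∀ (T : EuclideanSpace ℂ Λ →L[ℂ] EuclideanSpace ℂ Λ) (n : ℕ),
      ‖(T ^ n) φ‖ ≤ ‖T‖ ^ n * ‖φ‖ := by
    intro T n
    induction n with
    | zero =>
      rw [pow_zero, pow_zero, one_mul, ContinuousLinearMap.one_apply]
    | succ n ih =>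
      rw [pow_succ']
      calc ‖(T * T ^ n) φ‖ = ‖T ((T ^ n) φ)‖ := rfl
        _ ≤ ‖T‖ * ‖(T ^ n) φ‖ := T.le_opNorm _
        _ ≤ ‖T‖ * (‖T‖ ^ n * ‖φ‖) := mul_le_mul_of_nonneg_left ih (norm_nonneg _)
        _ = ‖T‖ ^ (n + 1) * ‖φ‖ := by ring
  have hterm : ∀ n : ℕ, ‖g n‖ ≤ (τ * J) ^ n / n.factorial := by
    intro n
    have h1 : ‖g n‖ = (n.factorial : ℝ)⁻¹ * ‖(inner ℂ ψ ((((τ : ℂ) • A) ^ n) φ) : ℂ)‖ := by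
      simp only [hg, hLval, ContinuousLinearMap.smul_apply, inner_smul_right, norm_mul,
        norm_inv, Complex.norm_natCast]
    have h2 : ‖(inner ℂ ψ ((((τ : ℂ) • A) ^ n) φ) : ℂ)‖ ≤ (τ * J) ^ n := by
      calc ‖(inner ℂ ψ ((((τ : ℂ) • A) ^ n) φ) : ℂ)‖
          ≤ ‖ψ‖ * ‖(((τ : ℂ) • A) ^ n) φ‖ := norm_inner_le_norm _ _
        _ ≤ ‖(τ : ℂ) • A‖ ^ n * ‖φ‖ := by
            rw [hψ, one_mul]
            exact happly _ n
        _ ≤ (τ * J) ^ n := by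
            rw [hφ, mul_one]
            refine pow_le_pow_left₀ (norm_nonneg _) ?_ n
            have hτn : ‖(τ : ℂ)‖ = τ := by
              rw [Complex.norm_real, Real.norm_of_nonneg hτ]
            refine le_trans (ContinuousLinearMap.opNorm_smul_le _ _) ?_
            rw [hτn]
            exact mul_le_mul_of_nonneg_left hnormA hτ
    rw [h1, div_eq_inv_mul]
    exact mul_le_mul_of_nonneg_left h2 (by positivity)
  -- tail estimate
  set b : ℕ → ℝ := fun n => (τ * J) ^ n / n.factorial with hb
  have hbsum : Summable b := Real.summable_pow_div_factorial _
  have hbsum' : Summable fun n => b (n + (M + 1)) := (summable_nat_add_iff (M + 1)).2 hbsum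
  have hgn : Summable fun n => ‖g (n + (M + 1))‖ :=
    Summable.of_nonneg_of_le (fun _ => norm_nonneg _) (fun n => hterm _) hbsum'
  have hshift : ∑' n, g n = ∑' n, g (n + (M + 1)) := by
    have hkey := Summable.sum_add_tsum_nat_add (M + 1) hgsum
    rw [← hkey, Finset.sum_eq_zero, zero_add]
    intro i hi
    exact hvanish i (Nat.lt_succ_iff.mp (Finset.mem_range.mp hi))
  rw [hmain, hshift]
  calc ‖∑' n, g (n + (M + 1))‖
      ≤ ∑' n, ‖g (n + (M + 1))‖ := norm_tsum_le_tsum_norm hgn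
    _ ≤ ∑' n, b (n + (M + 1)) := Summable.tsum_le_tsum (fun n => hterm _) hgn hbsum'
    _ = ∑' m : ℕ, (τ * J) ^ (M + 1 + m) / Nat.factorial (M + 1 + m) := by
        refine tsum_congr fun n => ?_
        rw [hb]
        simp only [add_comm n (M + 1)]
end

section
/- Let n be a positive integer. Define the 2×2 complex matrices Z := diag(1, −1), a := the matrix with (a)_{01} = 1 and all other entries 0 (i.e. a = |0⟩⟨1|), a† its conjugate transpose, and 1 the identity. Work with matrices indexed by (Fin n → Fin 2) (n qubits). Let O : Fin n → Matrix (Fin 2) (Fin 2) ℂ with each O_j ∈ {1, Z, a, a†}, and define the tensor-product matrix P by P(x, y) := ∏_j O_j(x_j, y_j). Define V by V(x, y) := ∑_j Z(x_j, y_j) ∏_{k ≠ j} (if x_k = y_k then 1 else 0), i.e. V is the sum over sites of Pauli Z. Let q := #{j : O_j = a} − #{j : O_j = a†}. Then [V, P] = 2q · P, and consequently [[V, P], V] = −4q² · P. -/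
open scoped Matrix

open Finset in
/-- A product of single-site operators drawn from {1, Z, a, a†} on n qubits is an
eigenoperator of commutation with V = ∑_j Z_j, with eigenvalue 2q where q is the
charge; hence an eigenoperator of Δ ↦ [[V,Δ],V] with eigenvalue -4q². -/
theorem charge_eigenoperator
    (n : ℕ) (hn : 0 < n)
    (Z a : Matrix (Fin 2) (Fin 2) ℂ)
    (hZ : Z = !![1, 0; 0, -1]) (ha : a = !![0, 1; 0, 0])
    (O : Fin n → Matrix (Fin 2) (Fin 2) ℂ)
    (hO : ∀ j, O j = 1 ∨ O j = Z ∨ O j = a ∨ O j = aᴴ)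
    (P V : Matrix (Fin n → Fin 2) (Fin n → Fin 2) ℂ)
    (hP : ∀ x y, P x y = ∏ j, O j (x j) (y j))
    (hV : ∀ x y, V x y = ∑ j, Z (x j) (y j) *
      ∏ k ∈ Finset.univ.erase j, (if x k = y k then (1 : ℂ) else 0))
    (q : ℤ)
    (hq : q = ((Finset.univ.filter fun j => O j = a).card : ℤ) -
      ((Finset.univ.filter fun j => O j = aᴴ).card : ℤ)) :
    ⁅V, P⁆ = ((2 * q : ℤ) : ℂ) • P ∧
    ⁅⁅V, P⁆, V⁆ = ((-4 * q ^ 2 : ℤ) : ℂ) • P := by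
  -- explicit form of aᴴ
  have haH : aᴴ = !![0, 0; 1, 0] := by
    subst ha
    ext i j
    fin_cases i <;> fin_cases j <;>
      simp [Matrix.conjTranspose_apply]
  -- pairwise distinctness
  have h1a : (1 : Matrix (Fin 2) (Fin 2) ℂ) ≠ a := by
    intro h
    have := congrFun (congrFun h 0) 1
    simp [ha, Matrix.one_apply] at this
  have h1aH : (1 : Matrix (Fin 2) (Fin 2) ℂ) ≠ aᴴ := by
    intro h
    have := congrFun (congrFun h 1) 0
    rw [haH] at this
    simp [Matrix.one_apply] at this
  have hZa : Z ≠ a := by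
    intro h
    have := congrFun (congrFun h 0) 0
    simp [ha, hZ] at this
  have hZaH : Z ≠ aᴴ := by
    intro h
    have := congrFun (congrFun h 0) 0
    rw [haH, hZ] at this
    simp at this
  have haaH : aᴴ ≠ a := by
    intro h
    have := congrFun (congrFun h 0) 1
    rw [haH, ha] at this
    simp at this
  -- Z is diagonal & off-diagonal zero
  have hZ0 : ∀ u v : Fin 2, u ≠ v → Z u v = 0 := by
    intro u v huv
    fin_cases u <;> fin_cases v <;> simp_all [hZ]
  -- V is diagonal
  set d : (Fin n → Fin 2) → ℂ := fun x => ∑ j, Z (x j) (x j) with hd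
  have hVd : V = Matrix.diagonal d := by
    ext x y
    rw [hV]
    by_cases hxy : x = y
    · subst hxy
      simp [Matrix.diagonal_apply_eq, hd]
    · obtain ⟨k₀, hk₀⟩ := Function.ne_iff.mp hxy
      rw [Matrix.diagonal_apply_ne _ hxy]
      apply Finset.sum_eq_zero
      intro j _
      by_cases hj : j = k₀
      · subst hj
        rw [hZ0 _ _ hk₀, zero_mul]
      · have : k₀ ∈ Finset.univ.erase j := by
          simp [Ne.symm hj]
        rw [Finset.prod_eq_zero this (by simp [hk₀]), mul_zero]
  -- per-site charge
  have site : ∀ j (u v : Fin 2), O j u v ≠ 0 →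
      Z u u - Z v v = (if O j = a then 2 else if O j = aᴴ then -2 else 0) := by
    intro j u v huv
    rcases hO j with h | h | h | h
    · rw [h, Matrix.one_apply] at huv
      have huv' : u = v := by by_contra hne; simp [hne] at huv
      rw [if_neg (h ▸ h1a), if_neg (h ▸ h1aH), huv', sub_self]
    · rw [h] at huv
      have huv' : u = v := by by_contra hne; exact huv (hZ0 _ _ hne)
      rw [if_neg (h ▸ hZa), if_neg (h ▸ hZaH), huv', sub_self]
    · rw [if_pos h]
      rw [h, ha] at huv
      rw [hZ]
      fin_cases u <;> fin_cases v <;> simp at huv ⊢ <;> norm_num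
    · rw [if_neg (fun h2 => haaH (h.symm.trans h2)), if_pos h]
      rw [h, haH] at huv
      rw [hZ]
      fin_cases u <;> fin_cases v <;> simp at huv ⊢ <;> norm_num
  -- the eigenvalue identity entrywise
  have key : ∀ x y, (d x - d y) * P x y = ((2 * q : ℤ) : ℂ) * P x y := by
    intro x y
    by_cases hPxy : P x y = 0
    · rw [hPxy, mul_zero, mul_zero]
    · congr 1
      rw [hP] at hPxy
      have hne := Finset.prod_ne_zero_iff.mp hPxy
      have : d x - d y = ∑ j, (if O j = a then (2:ℂ) else if O j = aᴴ then -2 else 0) := by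
        rw [hd]
        simp only [← Finset.sum_sub_distrib]
        exact Finset.sum_congr rfl fun j _ => site j (x j) (y j) (hne j (Finset.mem_univ j))
      rw [this]
      have split : ∀ j : Fin n, (if O j = a then (2:ℂ) else if O j = aᴴ then -2 else 0) =
          (if O j = a then (2:ℂ) else 0) + (if O j = aᴴ then (-2:ℂ) else 0) := by
        intro j
        by_cases h1 : O j = a
        · rw [if_pos h1, if_pos h1, if_neg (fun h2 => haaH (h2.symm.trans h1))]
          norm_num
        · rw [if_neg h1, if_neg h1]
          by_cases h2 : O j = aᴴ
          · rw [if_pos h2]; norm_num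
          · rw [if_neg h2]; norm_num
      rw [Finset.sum_congr rfl fun j _ => split j, Finset.sum_add_distrib]
      have e1 : ∑ j, (if O j = a then (2:ℂ) else 0)
          = ((Finset.univ.filter fun j => O j = a).card : ℂ) * 2 := by
        rw [← Finset.sum_filter, Finset.sum_const, nsmul_eq_mul]
      have e2 : ∑ j, (if O j = aᴴ then (-2:ℂ) else 0)
          = ((Finset.univ.filter fun j => O j = aᴴ).card : ℂ) * (-2) := by
        rw [← Finset.sum_filter, Finset.sum_const, nsmul_eq_mul]
      rw [e1, e2, hq]
      push_cast
      ring
  have part1 : ⁅V, P⁆ = ((2 * q : ℤ) : ℂ) • P := by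
    ext x y
    rw [Ring.lie_def, Matrix.sub_apply, hVd, Matrix.diagonal_mul, Matrix.mul_diagonal,
      Matrix.smul_apply, smul_eq_mul]
    rw [← key x y]
    ring
  refine ⟨part1, ?_⟩
  rw [part1, Ring.lie_def, smul_mul_assoc, mul_smul_comm, ← smul_sub, ← neg_sub, ← Ring.lie_def, part1]
  rw [smul_neg, smul_smul, ← neg_smul]
  congr 1
  push_cast
  ring
end

section
/- Let A be an associative ring which is also a ℂ-algebra, let ι be a finite index set, and let γ : ι → A satisfy the Majorana anticommutation relations γ_i γ_j + γ_j γ_i = 2 δ_{ij} · 1 for all i, j. Let h, v ∈ Matrix ι ι ℂ be antisymmetric (hᵀ = −h, vᵀ = −v), and set H := ∑_{i,j} h_{ij} γ_i γ_j and V := ∑_{i,j} v_{ij} γ_i γ_j. Then [H, V] = ∑_{i,j} (4 [h, v])_{ij} γ_i γ_j; that is, the commutator of two quadratic Majorana Hamiltonians is again quadratic, with single-particle matrix 4[h, v]. -/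
lemma quad_comm {A : Type*} [Ring A] (w x y z p q r s : A)
    (hxy : x*y = p - y*x) (hwy : w*y = q - y*w) (hxz : x*z = r - z*x) (hwz : w*z = s - z*w)
    (hp : ∀ t, p*t = t*p) (hr : ∀ t, r*t = t*r) (hs : ∀ t, s*t = t*s) :
    w*x*(y*z) - y*z*(w*x) = p*(w*z) - q*(x*z) + r*(y*w) - s*(y*x) := by
  have c1 : w*x*(y*z) = p*(w*z) - q*(x*z) + (r*(y*w) - s*(y*x) + y*z*(w*x)) := by
    calc w*x*(y*z) = w*(x*y)*z := by noncomm_ring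
    _ = w*(p - y*x)*z := by rw [hxy]
    _ = p*(w*z) - (w*y)*(x*z) := by
        rw [mul_sub, sub_mul, ← hp w]; noncomm_ring
    _ = p*(w*z) - (q - y*w)*(x*z) := by rw [hwy]
    _ = p*(w*z) - q*(x*z) + (y*w)*(x*z) := by noncomm_ring
    _ = p*(w*z) - q*(x*z) + (y*w)*(r - z*x) := by rw [hxz]
    _ = p*(w*z) - q*(x*z) + (r*(y*w) - y*(w*z)*x) := by
        rw [mul_sub, ← hr (y*w)]; noncomm_ring
    _ = p*(w*z) - q*(x*z) + (r*(y*w) - y*(s - z*w)*x) := by rw [hwz]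
    _ = p*(w*z) - q*(x*z) + (r*(y*w) - s*(y*x) + y*z*(w*x)) := by
        rw [mul_sub, sub_mul, ← hs y]; noncomm_ring
  rw [c1]; noncomm_ring

lemma key {A : Type*} [Ring A] [Algebra ℂ A] {ι : Type*} [DecidableEq ι]
    (γ : ι → A)
    (hγ : ∀ i j, γ i * γ j + γ j * γ i = if i = j then (2 : A) else 0)
    (a b c d : ι) :
    ⁅γ a * γ b, γ c * γ d⁆ =
      (if b = c then (2:ℂ) else 0) • (γ a * γ d)
      - (if a = c then (2:ℂ) else 0) • (γ b * γ d)
      + (if b = d then (2:ℂ) else 0) • (γ c * γ a)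
      - (if a = d then (2:ℂ) else 0) • (γ c * γ b) := by
  have e : ∀ i j, γ i * γ j = ((if i = j then (2:ℂ) else 0) • (1:A)) - γ j * γ i := by
    intro i j
    have : (if i = j then (2:A) else 0) = (if i = j then (2:ℂ) else 0) • (1:A) := by
      split <;> simp [two_smul, one_add_one_eq_two]
    exact eq_sub_of_add_eq (this ▸ hγ i j)
  have cent : ∀ (c : ℂ) (t : A), (c • (1:A)) * t = t * (c • (1:A)) := by
    intro c t; simp [smul_mul_assoc, mul_smul_comm]
  have := quad_comm (γ a) (γ b) (γ c) (γ d)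
    ((if b = c then (2:ℂ) else 0) • (1:A)) ((if a = c then (2:ℂ) else 0) • (1:A))
    ((if b = d then (2:ℂ) else 0) • (1:A)) ((if a = d then (2:ℂ) else 0) • (1:A))
    (e b c) (e a c) (e b d) (e a d) (cent _) (cent _) (cent _)
  rw [Ring.lie_def, this]
  simp [smul_mul_assoc]

lemma sum_lie' {A : Type*} [Ring A] {ι : Type*} (s : Finset ι) (f : ι → A) (y : A) :
    ⁅∑ i ∈ s, f i, y⁆ = ∑ i ∈ s, ⁅f i, y⁆ :=
  map_sum (AddMonoidHom.mk' (fun x => ⁅x, y⁆) (fun a b => by simp only [Ring.lie_def]; noncomm_ring)) f s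

lemma lie_sum' {A : Type*} [Ring A] {ι : Type*} (s : Finset ι) (f : ι → A) (y : A) :
    ⁅y, ∑ i ∈ s, f i⁆ = ∑ i ∈ s, ⁅y, f i⁆ :=
  map_sum (AddMonoidHom.mk' (fun x => ⁅y, x⁆) (fun a b => by simp only [Ring.lie_def]; noncomm_ring)) f s

lemma sum_ite_const {ι M : Type*} [Fintype ι] [AddCommMonoid M] (c : Prop) [Decidable c]
    (f : ι → M) : ∑ x : ι, (if c then f x else 0) = if c then ∑ x : ι, f x else 0 := by
  split <;> simp

lemma sum3_xz {ι M : Type*} [Fintype ι] [AddCommMonoid M] (F : ι → ι → ι → M) :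
    ∑ x : ι, ∑ y : ι, ∑ z : ι, F x y z = ∑ z : ι, ∑ y : ι, ∑ x : ι, F x y z :=
  calc ∑ x : ι, ∑ y : ι, ∑ z : ι, F x y z
      = ∑ x : ι, ∑ z : ι, ∑ y : ι, F x y z :=
        Finset.sum_congr rfl (fun _ _ => Finset.sum_comm)
    _ = ∑ z : ι, ∑ x : ι, ∑ y : ι, F x y z := Finset.sum_comm
    _ = ∑ z : ι, ∑ y : ι, ∑ x : ι, F x y z :=
        Finset.sum_congr rfl (fun _ _ => Finset.sum_comm)

lemma sum3_yz {ι M : Type*} [Fintype ι] [AddCommMonoid M] (F : ι → ι → ι → M) :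
    ∑ x : ι, ∑ y : ι, ∑ z : ι, F x y z = ∑ x : ι, ∑ z : ι, ∑ y : ι, F x y z :=
  Finset.sum_congr rfl (fun _ _ => Finset.sum_comm)

open scoped Matrix

/-- The commutator of two quadratic Majorana Hamiltonians is quadratic, with
single-particle matrix 4[h,v]. -/
theorem commutator_of_quadratic_majorana
    {A : Type*} [Ring A] [Algebra ℂ A]
    {ι : Type*} [Fintype ι] [DecidableEq ι]
    (γ : ι → A)
    (hγ : ∀ i j, γ i * γ j + γ j * γ i = if i = j then (2 : A) else 0)
    (h v : Matrix ι ι ℂ) (hh : hᵀ = -h) (hv : vᵀ = -v) :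
    ⁅∑ i, ∑ j, h i j • (γ i * γ j), ∑ i, ∑ j, v i j • (γ i * γ j)⁆ =
      ∑ i, ∑ j, ((4 : ℂ) • ⁅h, v⁆) i j • (γ i * γ j) := by
  have hh' : ∀ i j, h j i = -(h i j) := by
    intro i j
    have := congrFun (congrFun hh i) j
    simpa [Matrix.transpose_apply] using this
  letI := LieRing.ofAssociativeRing (A := A)
  letI := LieAlgebra.ofAssociativeAlgebra (R := ℂ) (A := A)
  simp only [sum_lie', lie_sum', smul_lie, lie_smul, key γ hγ, smul_sub, smul_add,
    Finset.smul_sum, smul_smul, mul_ite, mul_zero, ite_smul, zero_smul, smul_ite,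
    smul_zero, sum_ite_const, Finset.sum_sub_distrib, Finset.sum_add_distrib,
    Finset.sum_ite_eq, Finset.sum_ite_eq', Finset.mem_univ, if_true]
  have e1 : (∑ x : ι, ∑ x_1 : ι, ∑ x_2 : ι, (v x x_1 * (h x_2 x * 2)) • (γ x_2 * γ x_1))
      = ∑ i : ι, ∑ j : ι, ((2:ℂ) * (h * v) i j) • (γ i * γ j) := by
    rw [sum3_xz]
    refine Finset.sum_congr rfl fun i _ => Finset.sum_congr rfl fun j _ => ?_
    rw [← Finset.sum_smul]
    congr 1
    rw [Matrix.mul_apply, Finset.mul_sum]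
    exact Finset.sum_congr rfl fun k _ => by ring
  have e2 : (∑ x : ι, ∑ x_1 : ι, ∑ x_2 : ι, (v x x_1 * (h x x_2 * 2)) • (γ x_2 * γ x_1))
      = ∑ i : ι, ∑ j : ι, (-((2:ℂ) * (h * v) i j)) • (γ i * γ j) := by
    rw [sum3_xz]
    refine Finset.sum_congr rfl fun i _ => Finset.sum_congr rfl fun j _ => ?_
    rw [← Finset.sum_smul]
    congr 1
    rw [Matrix.mul_apply, Finset.mul_sum, ← Finset.sum_neg_distrib]
    exact Finset.sum_congr rfl fun k _ => by rw [hh' i k]; ring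
  have e3 : (∑ x : ι, ∑ x_1 : ι, ∑ x_2 : ι, (v x x_1 * (h x_2 x_1 * 2)) • (γ x * γ x_2))
      = ∑ i : ι, ∑ j : ι, (-((2:ℂ) * (v * h) i j)) • (γ i * γ j) := by
    rw [sum3_yz]
    refine Finset.sum_congr rfl fun i _ => Finset.sum_congr rfl fun j _ => ?_
    rw [← Finset.sum_smul]
    congr 1
    rw [Matrix.mul_apply, Finset.mul_sum, ← Finset.sum_neg_distrib]
    exact Finset.sum_congr rfl fun k _ => by rw [hh' k j]; ring
  have e4 : (∑ x : ι, ∑ x_1 : ι, ∑ x_2 : ι, (v x x_1 * (h x_1 x_2 * 2)) • (γ x * γ x_2))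
      = ∑ i : ι, ∑ j : ι, ((2:ℂ) * (v * h) i j) • (γ i * γ j) := by
    rw [sum3_yz]
    refine Finset.sum_congr rfl fun i _ => Finset.sum_congr rfl fun j _ => ?_
    rw [← Finset.sum_smul]
    congr 1
    rw [Matrix.mul_apply, Finset.mul_sum]
    exact Finset.sum_congr rfl fun k _ => by ring
  rw [e1, e2, e3, e4]
  simp only [← Finset.sum_sub_distrib, ← Finset.sum_add_distrib]
  refine Finset.sum_congr rfl fun i _ => Finset.sum_congr rfl fun j _ => ?_
  rw [← sub_smul, ← add_smul, ← sub_smul]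
  congr 1
  simp only [Matrix.smul_apply, Ring.lie_def, Matrix.sub_apply, smul_eq_mul]
  ring
end
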